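/- Let a > 0 and set q₁ = Φ(a), q₂ = Φ(a√2), q₃ = Φ(a√3). Define the quadratic D(τ) = (−9q₁ + 9q₂ − 3q₃)τ² + (6q₁ − 12q₂ + 6q₃)τ + (q₁ + 3q₂ − 3q₃). Then for every τ ∈ [0, 1/2], D(τ) ≥ (1−2τ)·D(0) + 2τ·D(1/2) (since the leading coefficient of D is negative, D is concave), and consequently D(τ) ≥ 0.5 − 0.94τ on [0, 1/2]. -/

import Mathlib

open MeasureTheory ProbabilityTheory Real

/-- The standard normal cumulative distribution function
`Φ(x) = (1/√(2π)) ∫_{-∞}^{x} e^{-t²/2} dt`. -/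
noncomputable def stdGaussianCDF (x : ℝ) : ℝ :=
  (Real.sqrt (2 * Real.pi))⁻¹ * ∫ t in Set.Iic x, Real.exp (-t ^ 2 / 2)

/-- The quadratic `D(τ) = (−9q₁+9q₂−3q₃)τ² + (6q₁−12q₂+6q₃)τ + (q₁+3q₂−3q₃)`
where `qⱼ = Φ(a√j)`. -/
noncomputable def quadD (a τ : ℝ) : ℝ :=
  (-9 * stdGaussianCDF a + 9 * stdGaussianCDF (a * Real.sqrt 2)
      - 3 * stdGaussianCDF (a * Real.sqrt 3)) * τ ^ 2
    + (6 * stdGaussianCDF a - 12 * stdGaussianCDF (a * Real.sqrt 2)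
      + 6 * stdGaussianCDF (a * Real.sqrt 3)) * τ
    + (stdGaussianCDF a + 3 * stdGaussianCDF (a * Real.sqrt 2)
      - 3 * stdGaussianCDF (a * Real.sqrt 3))

namespace Stmt14Aux

lemma gauss_integrable : Integrable (fun t : ℝ => Real.exp (-t ^ 2 / 2)) := by
  have h : (fun t : ℝ => Real.exp (-t ^ 2 / 2))
      = fun t : ℝ => Real.exp (-(1/2 : ℝ) * t ^ 2) := by
    funext t; ring_nf
  rw [h]
  exact integrable_exp_neg_mul_sq (by norm_num)

lemma gauss_cont : Continuous (fun t : ℝ => Real.exp (-t ^ 2 / 2)) := by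
  fun_prop

lemma sqrt_two_pi_pos : 0 < Real.sqrt (2 * Real.pi) :=
  Real.sqrt_pos.2 (by positivity)

lemma cdf_sub (x y : ℝ) : stdGaussianCDF y - stdGaussianCDF x
    = (Real.sqrt (2 * Real.pi))⁻¹ * ∫ t in x..y, Real.exp (-t ^ 2 / 2) := by
  unfold stdGaussianCDF
  rw [← mul_sub, intervalIntegral.integral_Iic_sub_Iic gauss_integrable.integrableOn
    gauss_integrable.integrableOn]

lemma cdf_zero : stdGaussianCDF 0 = 1 / 2 := by
  have h1 : (∫ t in Set.Iic (0:ℝ), Real.exp (-t ^ 2 / 2))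
      = ∫ t in Set.Ioi (0:ℝ), Real.exp (-t ^ 2 / 2) := by
    have h := integral_comp_neg_Iic (0:ℝ) (fun t : ℝ => Real.exp (-t ^ 2 / 2))
    simp only [neg_zero, neg_sq] at h
    exact h
  have h2 : (∫ t in Set.Ioi (0:ℝ), Real.exp (-t ^ 2 / 2)) = Real.sqrt (2 * Real.pi) / 2 := by
    have h := integral_gaussian_Ioi (1/2)
    have e : ∀ t : ℝ, -(1/2 : ℝ) * t ^ 2 = -t ^ 2 / 2 := fun t => by ring
    simp_rw [e] at h
    rw [h, show Real.pi / (1/2) = 2 * Real.pi by ring]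
  unfold stdGaussianCDF
  rw [h1, h2]
  field_simp

lemma cdf_eq (x : ℝ) : stdGaussianCDF x
    = 1/2 + (Real.sqrt (2 * Real.pi))⁻¹ * ∫ t in (0:ℝ)..x, Real.exp (-t ^ 2 / 2) := by
  have h := cdf_sub 0 x
  rw [cdf_zero] at h
  linarith

lemma comp_sqrt (c a : ℝ) (hc : 0 < c) :
    (∫ t in (0:ℝ)..(a * Real.sqrt c), Real.exp (-t ^ 2 / 2))
      = Real.sqrt c * ∫ t in (0:ℝ)..a, Real.exp (-(c * t ^ 2) / 2) := by
  have hs : (0:ℝ) < Real.sqrt c := Real.sqrt_pos.2 hc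
  have h := intervalIntegral.integral_comp_mul_left (a := (0:ℝ)) (b := a)
      (f := fun t => Real.exp (-t ^ 2 / 2)) (c := Real.sqrt c) hs.ne'
  have hx : ∀ x : ℝ, Real.exp (-(Real.sqrt c * x) ^ 2 / 2) = Real.exp (-(c * x ^ 2) / 2) := by
    intro x; rw [mul_pow, Real.sq_sqrt hc.le]
  simp only [hx, mul_zero, smul_eq_mul] at h
  rw [mul_comm a (Real.sqrt c), h]
  field_simp



lemma s2u : Real.sqrt 2 ≤ 1.4142136 := by
  rw [show (1.4142136:ℝ) = Real.sqrt (1.4142136 ^ 2) from (Real.sqrt_sq (by norm_num)).symm]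
  exact Real.sqrt_le_sqrt (by norm_num)

lemma s2l : 1.4142 ≤ Real.sqrt 2 := by
  rw [show (1.4142:ℝ) = Real.sqrt (1.4142 ^ 2) from (Real.sqrt_sq (by norm_num)).symm]
  exact Real.sqrt_le_sqrt (by norm_num)

lemma s3u : Real.sqrt 3 ≤ 1.7320509 := by
  rw [show (1.7320509:ℝ) = Real.sqrt (1.7320509 ^ 2) from (Real.sqrt_sq (by norm_num)).symm]
  exact Real.sqrt_le_sqrt (by norm_num)

lemma s3l : 1.732 ≤ Real.sqrt 3 := by
  rw [show (1.732:ℝ) = Real.sqrt (1.732 ^ 2) from (Real.sqrt_sq (by norm_num)).symm]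
  exact Real.sqrt_le_sqrt (by norm_num)

lemma s2pil : 2.5066 ≤ Real.sqrt (2 * Real.pi) := by
  rw [show (2.5066:ℝ) = Real.sqrt (2.5066 ^ 2) from (Real.sqrt_sq (by norm_num)).symm]
  exact Real.sqrt_le_sqrt (by nlinarith [Real.pi_gt_d6])

lemma K_le : (Real.sqrt (2 * Real.pi))⁻¹ ≤ 0.4 := by
  have h : (2.5:ℝ) ≤ Real.sqrt (2 * Real.pi) := le_trans (by norm_num) s2pil
  calc (Real.sqrt (2 * Real.pi))⁻¹ ≤ (2.5:ℝ)⁻¹ :=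
        inv_anti₀ (by norm_num) h
    _ ≤ 0.4 := by norm_num

lemma K_le' : (Real.sqrt (2 * Real.pi))⁻¹ ≤ (2.5066:ℝ)⁻¹ :=
  inv_anti₀ (by norm_num) s2pil

/-- upper bound from alternating series, via `Real.exp_bound` -/
lemma expNegUpper {y : ℝ} (h0 : 0 ≤ y) (h1 : y ≤ 1) :
    Real.exp (-y) ≤ 1 - y + y ^ 2 / 2 - y ^ 3 / 6 + y ^ 4 / 24 := by
  have hb := Real.exp_bound (x := -y) (by rwa [abs_neg, abs_of_nonneg h0]) (n := 6) (by norm_num)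
  rw [abs_neg, abs_of_nonneg h0] at hb
  rw [abs_le] at hb
  have h2 := hb.2
  simp [Finset.sum_range_succ, Nat.factorial] at h2
  nlinarith [pow_nonneg h0 5, pow_nonneg h0 6, h2]

/-- lower bound from alternating series, via `Real.exp_bound` -/
lemma expNegLower {y : ℝ} (h0 : 0 ≤ y) (h1 : y ≤ 1) :
    1 - y + y ^ 2 / 2 - y ^ 3 / 6 ≤ Real.exp (-y) := by
  have hb := Real.exp_bound (x := -y) (by rwa [abs_neg, abs_of_nonneg h0]) (n := 5) (by norm_num)
  rw [abs_neg, abs_of_nonneg h0] at hb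
  rw [abs_le] at hb
  have h2 := hb.1
  simp [Finset.sum_range_succ, Nat.factorial] at h2
  nlinarith [pow_nonneg h0 4, pow_nonneg h0 5, h2]

lemma aexp_le {a : ℝ} (ha : 0 ≤ a) : a * Real.exp (-a ^ 2 / 2) ≤ 2 / 3 := by
  have h1 : Real.exp (a ^ 2 / 2) = Real.exp (a ^ 2 / 4) ^ 2 := by
    rw [← Real.exp_nat_mul]; norm_num; ring_nf
  have h2 : 1 + a ^ 2 / 4 ≤ Real.exp (a ^ 2 / 4) := by
    have := Real.add_one_le_exp (a ^ 2 / 4); linarith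
  have h3 : (1 + a ^ 2 / 4) ^ 2 ≤ Real.exp (a ^ 2 / 2) := by
    rw [h1]
    apply pow_le_pow_left₀ (by positivity) h2
  have h4 : 3 * a ≤ 2 * Real.exp (a ^ 2 / 2) := by
    nlinarith [h3, sq_nonneg (a - 1.15), sq_nonneg (a ^ 2 - 4/3), sq_nonneg (a*(a - 1.15)),
      sq_nonneg (a - 4/3)]
  rw [show -a ^ 2 / 2 = -(a ^ 2 / 2) by ring, Real.exp_neg]
  rw [mul_inv_le_iff₀ (Real.exp_pos _)]
  linarith

lemma int_le_const {x y : ℝ} (hxy : x ≤ y) (hx : 0 ≤ x) :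
    (∫ t in x..y, Real.exp (-t ^ 2 / 2)) ≤ (y - x) * Real.exp (-x ^ 2 / 2) := by
  have h := intervalIntegral.integral_mono_on (μ := volume) (f := fun t => Real.exp (-t ^ 2 / 2))
      (g := fun _ => Real.exp (-x ^ 2 / 2)) hxy
      (gauss_cont.intervalIntegrable _ _) intervalIntegrable_const ?_
  · simpa [intervalIntegral.integral_const, smul_eq_mul] using h
  · intro t ht
    apply Real.exp_le_exp.2
    have h1 : x ≤ t := ht.1
    nlinarith

lemma const_le_int {x : ℝ} (hx : 0 ≤ x) :
    x * Real.exp (-x ^ 2 / 2) ≤ ∫ t in (0:ℝ)..x, Real.exp (-t ^ 2 / 2) := by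
  have h := intervalIntegral.integral_mono_on (μ := volume)
      (f := fun _ => Real.exp (-x ^ 2 / 2))
      (g := fun t => Real.exp (-t ^ 2 / 2)) hx
      intervalIntegrable_const (gauss_cont.intervalIntegrable _ _) ?_
  · simpa [intervalIntegral.integral_const, smul_eq_mul] using h
  · intro t ht
    apply Real.exp_le_exp.2
    have h1 : t ≤ x := ht.2
    have h2 : 0 ≤ t := ht.1
    nlinarith

noncomputable def Hfun (t : ℝ) : ℝ :=
  3 * Real.sqrt 2 * Real.exp (-(2 * t ^ 2) / 2) + 3 * Real.sqrt 3 * Real.exp (-(3 * t ^ 2) / 2)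
    - 7 * Real.exp (-t ^ 2 / 2)

lemma Hcont : Continuous Hfun := by unfold Hfun; fun_prop

lemma Hneg {t : ℝ} (ht : 0.64 ≤ t) : Hfun t ≤ 0 := by
  have hvpos : 0 < Real.exp (-t ^ 2 / 2) := Real.exp_pos _
  set v := Real.exp (-t ^ 2 / 2) with hv
  have hvb : v ≤ 0.82036 := by
    have h1 : v ≤ Real.exp (-(0.2048:ℝ)) := by
      apply Real.exp_le_exp.2; nlinarith
    have h4 : ((3.2048:ℝ)/3) ^ 3 ≤ Real.exp (0.2048:ℝ) := by
      have h3 : Real.exp (0.2048:ℝ) = Real.exp (0.2048/3) ^ 3 := by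
        rw [← Real.exp_nat_mul]; norm_num
      rw [h3]
      apply pow_le_pow_left₀ (by norm_num)
      linarith [Real.add_one_le_exp ((0.2048:ℝ)/3)]
    have h5 : (1/(0.82036:ℝ)) ≤ Real.exp 0.2048 := le_trans (by norm_num) h4
    have h2 : Real.exp (-(0.2048:ℝ)) ≤ 0.82036 := by
      rw [Real.exp_neg]
      calc (Real.exp (0.2048:ℝ))⁻¹ ≤ (1/(0.82036:ℝ))⁻¹ := inv_anti₀ (by norm_num) h5
        _ = 0.82036 := by norm_num
    linarith
  have e2 : Real.exp (-(2 * t ^ 2) / 2) = v ^ 2 := by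
    rw [hv, ← Real.exp_nat_mul]; congr 1; push_cast; ring
  have e3 : Real.exp (-(3 * t ^ 2) / 2) = v ^ 3 := by
    rw [hv, ← Real.exp_nat_mul]; congr 1; push_cast; ring
  unfold Hfun
  rw [e2, e3, ← hv]
  have hw2 : Real.sqrt 2 * v ≤ 1.4142136 * 0.82036 :=
    mul_le_mul s2u hvb hvpos.le (by norm_num)
  have hw3 : Real.sqrt 3 * v ^ 2 ≤ 1.7320509 * 0.82036 ^ 2 := by
    apply mul_le_mul s3u _ (by positivity) (by norm_num)
    nlinarith
  have key : 3 * (Real.sqrt 2 * v) + 3 * (Real.sqrt 3 * v ^ 2) - 7 ≤ 0 := by nlinarith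
  have h6 : v * (3 * (Real.sqrt 2 * v) + 3 * (Real.sqrt 3 * v ^ 2) - 7) ≤ v * 0 :=
    mul_le_mul_of_nonneg_left key hvpos.le
  nlinarith [h6]

lemma hpt {t : ℝ} (h0 : 0 ≤ t) (h1 : t ≤ 0.64) :
    Hfun t ≤ 243881/100000 - 853689/100000*t^2 + 1418401/200000*t^4
      - 696823/200000*t^6 + 3054821/2400000*t^8 := by
  have hx0 : (0:ℝ) ≤ t ^ 2 := sq_nonneg t
  have hx1 : t ^ 2 ≤ 0.4096 := by nlinarith
  have e2 : Real.exp (-(2*t^2)/2) ≤ 1 - t^2 + (t^2)^2/2 - (t^2)^3/6 + (t^2)^4/24 := by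
    have h := expNegUpper (y := t^2) hx0 (by linarith)
    rw [show -(2*t^2)/2 = -(t^2) by ring]
    exact h
  have e3 : Real.exp (-(3*t^2)/2)
      ≤ 1 - (3*t^2/2) + (3*t^2/2)^2/2 - (3*t^2/2)^3/6 + (3*t^2/2)^4/24 := by
    have h := expNegUpper (y := 3*t^2/2) (by positivity) (by linarith)
    rw [show -(3*t^2)/2 = -(3*t^2/2) by ring]
    exact h
  have e1 : 1 - (t^2/2) + (t^2/2)^2/2 - (t^2/2)^3/6 ≤ Real.exp (-t^2/2) := by
    have h := expNegLower (y := t^2/2) (by positivity) (by linarith)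
    rw [show -t^2/2 = -(t^2/2) by ring]
    exact h
  have A : 3*Real.sqrt 2 * Real.exp (-(2*t^2)/2)
      ≤ (424265/100000) * (1 - t^2 + (t^2)^2/2 - (t^2)^3/6 + (t^2)^4/24) := by
    have h32 : 3*Real.sqrt 2 ≤ 424265/100000 := by nlinarith [s2u]
    exact mul_le_mul h32 e2 (Real.exp_pos _).le (by norm_num)
  have B : 3*Real.sqrt 3 * Real.exp (-(3*t^2)/2)
      ≤ (519616/100000) * (1 - (3*t^2/2) + (3*t^2/2)^2/2 - (3*t^2/2)^3/6 + (3*t^2/2)^4/24) := by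
    have h33 : 3*Real.sqrt 3 ≤ 519616/100000 := by nlinarith [s3u]
    exact mul_le_mul h33 e3 (Real.exp_pos _).le (by norm_num)
  have C : 7 * (1 - (t^2/2) + (t^2/2)^2/2 - (t^2/2)^3/6) ≤ 7 * Real.exp (-t^2/2) := by
    linarith
  unfold Hfun
  nlinarith [A, B, C]

lemma P_cert {a : ℝ} (h0 : 0 ≤ a) (h1 : a ≤ 0.64) :
    (243881/100000)*a - (284563/100000)*a^3 + (1418401/1000000)*a^5
      - (696823/1400000)*a^7 + (3054821/21600000)*a^9 ≤ 9525/10000 := by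
  have hb : (0:ℝ) ≤ 0.64 - a := by linarith
  nlinarith [sq_nonneg (a - 0.626), mul_nonneg h0 (sq_nonneg (a - 0.626)),
    mul_nonneg (mul_nonneg h0 hb) (sq_nonneg (a - 0.626)),
    mul_nonneg hb (sq_nonneg (a*(a - 0.626))),
    sq_nonneg (a^2*(a - 0.626)), mul_nonneg h0 (sq_nonneg (a^2*(a - 0.626))),
    mul_nonneg (mul_nonneg h0 hb) (sq_nonneg (a^2*(a - 0.626))),
    mul_nonneg hb (sq_nonneg (a^3*(a - 0.626)))]

lemma poly_integral (b : ℝ) :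
    (∫ t in (0:ℝ)..b, (243881/100000 - 853689/100000*t^2 + 1418401/200000*t^4
      - 696823/200000*t^6 + 3054821/2400000*t^8))
    = 243881/100000*b - 284563/100000*b^3 + 1418401/1000000*b^5
      - 696823/1400000*b^7 + 3054821/21600000*b^9 := by
  have h : ∀ t : ℝ, HasDerivAt (fun u : ℝ => 243881/100000*u - 284563/100000*u^3
      + 1418401/1000000*u^5 - 696823/1400000*u^7 + 3054821/21600000*u^9)
      (243881/100000 - 853689/100000*t^2 + 1418401/200000*t^4
      - 696823/200000*t^6 + 3054821/2400000*t^8) t := by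
    intro t
    have h1 := (hasDerivAt_id t).const_mul (243881/100000:ℝ)
    have h3 := (hasDerivAt_pow 3 t).const_mul (284563/100000:ℝ)
    have h5 := (hasDerivAt_pow 5 t).const_mul (1418401/1000000:ℝ)
    have h7 := (hasDerivAt_pow 7 t).const_mul (696823/1400000:ℝ)
    have h9 := (hasDerivAt_pow 9 t).const_mul (3054821/21600000:ℝ)
    have hh := (((h1.sub h3).add h5).sub h7).add h9
    refine hh.congr_deriv ?_
    push_cast; ring
  rw [intervalIntegral.integral_eq_sub_of_hasDerivAt (fun t _ => h t)
    (by apply Continuous.intervalIntegrable; fun_prop)]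
  ring

lemma H_int_le1 {b : ℝ} (h0 : 0 ≤ b) (h1 : b ≤ 0.64) :
    (∫ t in (0:ℝ)..b, Hfun t) ≤ 0.9525 := by
  have hmono := intervalIntegral.integral_mono_on (μ := volume) h0
      (Hcont.intervalIntegrable _ _)
      (((by fun_prop : Continuous fun t : ℝ => (243881/100000 - 853689/100000*t^2
          + 1418401/200000*t^4 - 696823/200000*t^6
          + 3054821/2400000*t^8))).intervalIntegrable _ _)
      (fun t ht => hpt ht.1 (le_trans ht.2 h1))
  rw [poly_integral] at hmono
  have hc := P_cert h0 h1
  norm_num at hmono hc ⊢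
  linarith

lemma H_int_le {b : ℝ} (h0 : 0 ≤ b) : (∫ t in (0:ℝ)..b, Hfun t) ≤ 0.9525 := by
  rcases le_or_gt b 0.64 with h | h
  · exact H_int_le1 h0 h
  · have hsplit := intervalIntegral.integral_add_adjacent_intervals
      (a := (0:ℝ)) (b := (0.64:ℝ)) (c := b) (μ := volume)
      (Hcont.intervalIntegrable _ _) (Hcont.intervalIntegrable _ _)
    have h2 : (∫ t in (0.64:ℝ)..b, Hfun t) ≤ 0 := by
      have hm := intervalIntegral.integral_mono_on (μ := volume) h.le
        (Hcont.intervalIntegrable _ _) (intervalIntegrable_const (c := (0:ℝ)))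
        (fun t ht => Hneg ht.1)
      simpa using hm
    have h3 := H_int_le1 (by norm_num : (0:ℝ) ≤ 0.64) le_rfl
    linarith [hsplit]

lemma D_zero (a : ℝ) (ha : 0 < a) :
    1/2 ≤ stdGaussianCDF a + 3*stdGaussianCDF (a*Real.sqrt 2) - 3*stdGaussianCDF (a*Real.sqrt 3) := by
  set K := (Real.sqrt (2*Real.pi))⁻¹ with hKdef
  have hKpos : 0 < K := inv_pos.2 sqrt_two_pi_pos
  have h23 : a * Real.sqrt 2 ≤ a * Real.sqrt 3 := by nlinarith [s2u, s3l]
  have h2nn : (0:ℝ) ≤ a * Real.sqrt 2 := by positivity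
  set E1 := Real.exp (-a^2/2) with hE1
  set E2 := Real.exp (-a^2) with hE2
  have hE1pos : 0 < E1 := Real.exp_pos _
  have hE2pos : 0 < E2 := Real.exp_pos _
  have hE12 : E2 ≤ E1 := by rw [hE1, hE2]; apply Real.exp_le_exp.2; nlinarith
  -- lower bound for q1
  have hq1 := cdf_eq a
  have hlow : a * E1 ≤ ∫ t in (0:ℝ)..a, Real.exp (-t^2/2) := by
    rw [hE1, show -a^2/2 = -a^2/2 from rfl]
    exact const_le_int ha.le
  -- upper bound for q3 - q2
  have hdiff := cdf_sub (a*Real.sqrt 2) (a*Real.sqrt 3)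
  have hup := int_le_const h23 h2nn
  have harg : -(a*Real.sqrt 2)^2/2 = -a^2 := by
    rw [mul_pow, Real.sq_sqrt (by norm_num : (0:ℝ) ≤ 2)]; ring
  rw [harg, ← hE2] at hup
  have d1 : a*Real.sqrt 3 - a*Real.sqrt 2 ≤ a/3 := by
    nlinarith [mul_le_mul_of_nonneg_left (show Real.sqrt 3 - Real.sqrt 2 ≤ 1/3 by
      linarith [s3u, s2l]) ha.le]
  have d2 : (a*Real.sqrt 3 - a*Real.sqrt 2) * E2 ≤ (a/3) * E1 :=
    le_trans (mul_le_mul_of_nonneg_right d1 hE2pos.le)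
      (mul_le_mul_of_nonneg_left hE12 (by positivity))
  have hA : stdGaussianCDF (a*Real.sqrt 3) - stdGaussianCDF (a*Real.sqrt 2)
      ≤ K * ((a/3) * E1) := by
    rw [hdiff]
    exact mul_le_mul_of_nonneg_left (le_trans hup d2) hKpos.le
  have hB : 1/2 + K * (a * E1) ≤ stdGaussianCDF a := by
    rw [hq1]
    have := mul_le_mul_of_nonneg_left hlow hKpos.le
    linarith
  nlinarith [hA, hB]

lemma coef_nonpos (a : ℝ) (ha : 0 < a) :
    0 ≤ 9*stdGaussianCDF a - 9*stdGaussianCDF (a*Real.sqrt 2) + 3*stdGaussianCDF (a*Real.sqrt 3) := by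
  set K := (Real.sqrt (2*Real.pi))⁻¹ with hKdef
  have hKpos : 0 < K := inv_pos.2 sqrt_two_pi_pos
  have hq3 : 1/2 ≤ stdGaussianCDF (a*Real.sqrt 3) := by
    have h := cdf_eq (a*Real.sqrt 3)
    have hnn : 0 ≤ ∫ t in (0:ℝ)..(a*Real.sqrt 3), Real.exp (-t^2/2) :=
      intervalIntegral.integral_nonneg (by positivity) (fun u _ => (Real.exp_pos _).le)
    nlinarith [mul_nonneg hKpos.le hnn]
  have h2a : a ≤ a*Real.sqrt 2 := by nlinarith [s2l]
  have hdiff := cdf_sub a (a*Real.sqrt 2)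
  have hup := int_le_const h2a ha.le
  set E := Real.exp (-a^2/2) with hE
  have hEpos : 0 < E := Real.exp_pos _
  have hae : a * E ≤ 2/3 := aexp_le ha.le
  have haE : 0 ≤ a * E := by positivity
  have hstep : (a*Real.sqrt 2 - a) * E ≤ 0.4142136*(2/3) := by
    have hcoef : Real.sqrt 2 - 1 ≤ 0.4142136 := by linarith [s2u]
    nlinarith [mul_le_mul_of_nonneg_right hcoef haE]
  have hq21 : stdGaussianCDF (a*Real.sqrt 2) - stdGaussianCDF a ≤ 1/6 := by
    rw [hdiff]
    have h1 : K * (∫ t in a..(a*Real.sqrt 2), Real.exp (-t^2/2))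
        ≤ K * ((a*Real.sqrt 2 - a) * E) :=
      mul_le_mul_of_nonneg_left hup hKpos.le
    have h2 : K * ((a*Real.sqrt 2 - a) * E) ≤ 0.4 * (0.4142136*(2/3)) := by
      apply mul_le_mul K_le hstep _ (by norm_num)
      nlinarith [mul_le_mul_of_nonneg_right (show (1:ℝ) ≤ Real.sqrt 2 by linarith [s2l]) haE]
    calc K * (∫ t in a..(a*Real.sqrt 2), Real.exp (-t^2/2))
        ≤ 0.4 * (0.4142136*(2/3)) := le_trans h1 h2
      _ ≤ 1/6 := by norm_num
  linarith

lemma D_half (a : ℝ) (ha : 0 < a) :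
    0.12 ≤ 7*stdGaussianCDF a - 3*stdGaussianCDF (a*Real.sqrt 2)
      - 3*stdGaussianCDF (a*Real.sqrt 3) := by
  set K := (Real.sqrt (2*Real.pi))⁻¹ with hKdef
  have hKpos : 0 < K := inv_pos.2 sqrt_two_pi_pos
  have hq1 := cdf_eq a
  have hq2 := cdf_eq (a*Real.sqrt 2)
  have hq3 := cdf_eq (a*Real.sqrt 3)
  rw [comp_sqrt 2 a (by norm_num)] at hq2
  rw [comp_sqrt 3 a (by norm_num)] at hq3
  set J1 := ∫ t in (0:ℝ)..a, Real.exp (-t^2/2) with hJ1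
  set J2 := ∫ t in (0:ℝ)..a, Real.exp (-(2*t^2)/2) with hJ2
  set J3 := ∫ t in (0:ℝ)..a, Real.exp (-(3*t^2)/2) with hJ3
  have hH : (∫ t in (0:ℝ)..a, Hfun t)
      = 3*Real.sqrt 2*J2 + 3*Real.sqrt 3*J3 - 7*J1 := by
    unfold Hfun
    rw [intervalIntegral.integral_sub, intervalIntegral.integral_add,
      intervalIntegral.integral_const_mul, intervalIntegral.integral_const_mul,
      intervalIntegral.integral_const_mul]
    all_goals apply Continuous.intervalIntegrable
    all_goals fun_prop
  have hb := H_int_le (le_of_lt ha)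
  rw [hH] at hb
  have h1 : K * (3*Real.sqrt 2*J2 + 3*Real.sqrt 3*J3 - 7*J1) ≤ K * 0.9525 :=
    mul_le_mul_of_nonneg_left hb hKpos.le
  have h2 : K * 0.9525 ≤ 0.38 := by
    calc K * 0.9525 ≤ (2.5066:ℝ)⁻¹ * 0.9525 :=
          mul_le_mul_of_nonneg_right K_le' (by norm_num)
      _ ≤ 0.38 := by norm_num
  rw [hq1, hq2, hq3]
  nlinarith [h1, h2]

end Stmt14Aux

open Stmt14Aux in
theorem stmt14 (a : ℝ) (ha : 0 < a) (τ : ℝ) (hτ : τ ∈ Set.Icc (0 : ℝ) (1 / 2)) :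
    (1 - 2 * τ) * quadD a 0 + 2 * τ * quadD a (1 / 2) ≤ quadD a τ
      ∧ 0.5 - 0.94 * τ ≤ quadD a τ := by
  obtain ⟨hτ0, hτh⟩ := hτ
  have hc := coef_nonpos a ha
  have hD0 := D_zero a ha
  have hDh := D_half a ha
  have key : quadD a τ - ((1 - 2*τ) * quadD a 0 + 2*τ * quadD a (1/2))
      = (9*stdGaussianCDF a - 9*stdGaussianCDF (a*Real.sqrt 2)
        + 3*stdGaussianCDF (a*Real.sqrt 3)) * (τ*(1/2 - τ)) := by
    unfold quadD; ring
  have hτθ : 0 ≤ τ*(1/2 - τ) := mul_nonneg hτ0 (by linarith)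
  have h1 : (1 - 2 * τ) * quadD a 0 + 2 * τ * quadD a (1 / 2) ≤ quadD a τ := by
    nlinarith [mul_nonneg hc hτθ, key]
  refine ⟨h1, ?_⟩
  have e0 : quadD a 0 = stdGaussianCDF a + 3*stdGaussianCDF (a*Real.sqrt 2)
      - 3*stdGaussianCDF (a*Real.sqrt 3) := by unfold quadD; ring
  have eh : quadD a (1/2) = (7*stdGaussianCDF a - 3*stdGaussianCDF (a*Real.sqrt 2)
      - 3*stdGaussianCDF (a*Real.sqrt 3))/4 := by unfold quadD; ring
  have hDh' : 0.03 ≤ quadD a (1/2) := by rw [eh]; norm_num at hDh ⊢; linarith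
  have hD0' : 0.5 ≤ quadD a 0 := by rw [e0]; norm_num; linarith
  nlinarith [mul_le_mul_of_nonneg_left hD0' (by linarith : (0:ℝ) ≤ 1 - 2*τ),
    mul_le_mul_of_nonneg_left hDh' (by linarith : (0:ℝ) ≤ 2*τ), h1]
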